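/- Let G be a group acting partially on a unital k-algebra A via α = ({α_g}, {D_g}), and suppose that each ideal D_g is a unital algebra, i.e. D_g = A·1_g for a central idempotent 1_g ∈ A. Then the linear map from the group algebra kG tensor A to A determined on basis elements by g · a = α_g(a·1_{g⁻¹}) is a partial action of the Hopf algebra kG on A. -/

import Mathlib

open TensorProduct

/-- let `α = ({α_g}, {D_g})` be a partial action of a group `G` on a unital
`k`-algebra `A` in which every ideal `D_g = A·1_g` is unital, with unit a central
idempotent `1_g = e g` (so `D_g = {a : a·(e g) = a}`, and `α g` is an algebra isomorphism
from `D_{g⁻¹}` onto `D_g`, encoded as a globally defined linear map that only depends on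
the `D_{g⁻¹}`-component).  Then the linear map `kG ⊗ A → A` determined on basis elements
by `g · a = α_g(a·1_{g⁻¹})` is a partial action of the group Hopf algebra `kG` on `A`.
Here the group Hopf algebra `kG` is encoded as a Hopf algebra `KG` having a basis
`(b_g)_{g ∈ G}` of group-like elements (`Δ(b_g) = b_g ⊗ b_g`) with `b_g b_h = b_{gh}`
and `b_1 = 1`. -/
theorem group_partial_action_gives_hopf_partial_action
    {k A : Type*} [Field k] [Ring A] [Algebra k A] {G : Type*} [Group G]
    {KG : Type*} [Ring KG] [HopfAlgebra k KG]
    -- `KG` is the group Hopf algebra `kG`: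
    (bKG : Module.Basis G k KG)
    (hb_mul : ∀ g h : G, bKG g * bKG h = bKG (g * h))
    (hb_one : bKG 1 = 1)
    (hΔ : ∀ g : G, Coalgebra.comul (R := k) (bKG g) = bKG g ⊗ₜ[k] bKG g)
    -- the central idempotents `1_g = e g` generating the unital ideals `D_g`
    (e : G → A)
    (he_idem : ∀ g : G, e g * e g = e g)
    (he_central : ∀ (g : G) (a : A), e g * a = a * e g)
    (he_one : e 1 = 1)
    -- the partial isomorphisms `α_g : D_{g⁻¹} → D_g`
    (α : G → (A →ₗ[k] A))
    (hα_one : ∀ a : A, α 1 a = a)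
    (hα_dom : ∀ (g : G) (a : A), α g (a * e g⁻¹) = α g a)
    (hα_range : ∀ (g : G) (a : A), α g a = α g a * e g)
    -- `α_g` is multiplicative on `D_{g⁻¹}`
    (hα_mul : ∀ (g : G) (a b : A),
      α g ((a * e g⁻¹) * (b * e g⁻¹)) = α g (a * e g⁻¹) * α g (b * e g⁻¹))
    -- `α_g : D_{g⁻¹} → D_g` is bijective, with inverse `α_{g⁻¹}`
    (hα_inv : ∀ (g : G) (a : A), α g⁻¹ (α g (a * e g⁻¹)) = a * e g⁻¹)
    -- condition (ii): `α_g(D_{g⁻¹} ∩ D_h) = D_g ∩ D_{gh}`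
    (hα_ideal : ∀ g h : G,
      (fun a : A => α g a) '' {a : A | a * (e g⁻¹ * e h) = a} =
        {a : A | a * (e g * e (g * h)) = a})
    -- condition (iii): `α_g(α_h(x)) = α_{gh}(x)` for `x ∈ D_{h⁻¹} ∩ D_{(gh)⁻¹}`
    (hα_comp : ∀ (g h : G) (x : A),
      α g (α h (x * (e h⁻¹ * e (g * h)⁻¹))) = α (g * h) (x * (e h⁻¹ * e (g * h)⁻¹))) :
    -- the linear action of `kG` determined by `g · a = α_g(a·1_{g⁻¹})` ...
    ∀ act : KG →ₗ[k] A →ₗ[k] A,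
      (∀ (g : G) (a : A), act (bKG g) a = α g (a * e g⁻¹)) →
      -- ... is a partial action of the Hopf algebra `kG`:
      -- (ii) `1 · a = a`
      ((∀ a : A, act 1 a = a) ∧
      -- (i) `x · (ab) = Σ (x₁·a)(x₂·b)`
      (∀ (x : KG) (a b : A),
        act x (a * b) = LinearMap.mul' k A
          (TensorProduct.map (act.flip a) (act.flip b) (Coalgebra.comul x))) ∧
      -- (iii) `x · (y · a) = Σ (x₁·1)((x₂y)·a)`
      (∀ (x y : KG) (a : A),
        act x (act y a) = LinearMap.mul' k A
          (TensorProduct.map (act.flip 1) ((act.flip a) ∘ₗ LinearMap.mulRight k y)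
            (Coalgebra.comul x)))) := by
  intro act hact
  -- products of central idempotents are central idempotents
  have prod_idem : ∀ g h : G, (e g * e h) * (e g * e h) = e g * e h := by
    intro g h
    rw [mul_assoc, ← mul_assoc (e h) (e g) (e h), ← he_central g (e h),
      mul_assoc (e g) (e h) (e h), he_idem, ← mul_assoc, he_idem]
  have central_prod : ∀ (g h : G) (x : A), (e g * e h) * x = x * (e g * e h) := by
    intro g h x
    rw [mul_assoc, he_central h, ← mul_assoc, he_central g, mul_assoc]
  have absorbL : ∀ (x : A) (g h : G), x * (e g * e h) = x → x * e g = x := by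
    intro x g h hx
    conv_lhs => rw [← hx]
    rw [mul_assoc, show e g * e h * e g = e g * e h from by
      rw [mul_assoc, ← he_central g (e h), ← mul_assoc, he_idem]]
    exact hx
  have absorbR : ∀ (x : A) (g h : G), x * (e g * e h) = x → x * e h = x := by
    intro x g h hx
    exact absorbL x h g (by rwa [he_central g (e h)] at hx)
  -- Key lemma: α_g maps the unit of D_{g⁻¹} ∩ D_h to the unit of D_g ∩ D_{gh}
  have K : ∀ g h : G, α g (e g⁻¹ * e h) = e g * e (g * h) := by
    intro g h
    have h1 : α g (e g⁻¹ * e h) * (e g * e (g * h)) = α g (e g⁻¹ * e h) := by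
      have mem : α g (e g⁻¹ * e h) ∈ {a : A | a * (e g * e (g * h)) = a} := by
        rw [← hα_ideal g h]
        exact ⟨e g⁻¹ * e h, prod_idem g⁻¹ h, rfl⟩
      exact mem
    have mem2 : e g * e (g * h) ∈ (fun a : A => α g a) '' {a : A | a * (e g⁻¹ * e h) = a} := by
      rw [hα_ideal g h]
      exact prod_idem g (g * h)
    obtain ⟨x, hx, hax⟩ := mem2
    have hax' : α g x = e g * e (g * h) := hax
    have hx1 : x * e g⁻¹ = x := absorbL x g⁻¹ h hx
    have hf1 : (e g⁻¹ * e h) * e g⁻¹ = e g⁻¹ * e h :=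
      absorbL _ g⁻¹ h (prod_idem g⁻¹ h)
    have hm := hα_mul g (e g⁻¹ * e h) x
    rw [hf1, hx1] at hm
    have hcx : (e g⁻¹ * e h) * x = x := by rw [central_prod]; exact hx
    rw [hcx, hax', h1] at hm
    exact hm.symm
  have αe : ∀ g : G, α g (e g⁻¹) = e g := by
    intro g
    have := K g g⁻¹
    rw [he_idem] at this
    simpa [he_one] using this
  -- multiplicativity in the convenient form
  have split : ∀ (g : G) (a b : A), (a * b) * e g⁻¹ = (a * e g⁻¹) * (b * e g⁻¹) := by
    intro g a b
    calc (a * b) * e g⁻¹ = a * (b * e g⁻¹) := mul_assoc a b (e g⁻¹)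
      _ = a * (b * (e g⁻¹ * e g⁻¹)) := by rw [he_idem]
      _ = a * ((b * e g⁻¹) * e g⁻¹) := by rw [mul_assoc]
      _ = a * ((e g⁻¹ * b) * e g⁻¹) := by rw [he_central]
      _ = a * (e g⁻¹ * (b * e g⁻¹)) := by rw [mul_assoc]
      _ = (a * e g⁻¹) * (b * e g⁻¹) := by rw [← mul_assoc]
  have mult : ∀ (g : G) (a b : A),
      α g ((a * b) * e g⁻¹) = α g (a * e g⁻¹) * α g (b * e g⁻¹) := by
    intro g a b
    rw [split, hα_mul]
  -- absorption of a central idempotent factor next to e g⁻¹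
  have absorb2 : ∀ (g : G) (a b : A), (a * e g⁻¹) * (e g⁻¹ * b) = a * (e g⁻¹ * b) := by
    intro g a b
    rw [mul_assoc a, ← mul_assoc (e g⁻¹) (e g⁻¹) b, he_idem]
  -- the crucial composition identity
  have L : ∀ (g h : G) (a : A),
      α g (α h (a * e h⁻¹) * e g⁻¹) = e g * α (g * h) (a * e (g * h)⁻¹) := by
    intro g h a
    have K2 : α h (e h⁻¹ * e (g * h)⁻¹) = e h * e g⁻¹ := by
      have := K h (h⁻¹ * g⁻¹)
      rw [mul_inv_rev]
      simpa [mul_inv_cancel_left] using this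
    have hb1 : (e h⁻¹ * e (g * h)⁻¹) * e h⁻¹ = e h⁻¹ * e (g * h)⁻¹ :=
      absorbL _ h⁻¹ (g * h)⁻¹ (prod_idem h⁻¹ (g * h)⁻¹)
    have stepA : α h (a * e h⁻¹) * e g⁻¹ = α h (a * (e h⁻¹ * e (g * h)⁻¹)) := by
      have hm := hα_mul h a (e h⁻¹ * e (g * h)⁻¹)
      rw [hb1, K2] at hm
      calc α h (a * e h⁻¹) * e g⁻¹
          = (α h (a * e h⁻¹) * e h) * e g⁻¹ := by rw [← hα_range]
        _ = α h (a * e h⁻¹) * (e h * e g⁻¹) := by rw [mul_assoc]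
        _ = α h ((a * e h⁻¹) * (e h⁻¹ * e (g * h)⁻¹)) := hm.symm
        _ = α h (a * (e h⁻¹ * e (g * h)⁻¹)) := by rw [absorb2]
    have K3 : α (g * h) (e (g * h)⁻¹ * e h⁻¹) = e (g * h) * e g := by
      have := K (g * h) h⁻¹
      simpa [mul_inv_cancel_right] using this
    have hb2 : (e (g * h)⁻¹ * e h⁻¹) * e (g * h)⁻¹ = e (g * h)⁻¹ * e h⁻¹ :=
      absorbL _ (g * h)⁻¹ h⁻¹ (prod_idem (g * h)⁻¹ h⁻¹)
    have stepB : e g * α (g * h) (a * e (g * h)⁻¹)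
        = α (g * h) (a * (e h⁻¹ * e (g * h)⁻¹)) := by
      have hm := hα_mul (g * h) a (e (g * h)⁻¹ * e h⁻¹)
      rw [hb2, K3] at hm
      calc e g * α (g * h) (a * e (g * h)⁻¹)
          = α (g * h) (a * e (g * h)⁻¹) * e g := (he_central g _).symm ▸ rfl
        _ = (α (g * h) (a * e (g * h)⁻¹) * e (g * h)) * e g := by rw [← hα_range]
        _ = α (g * h) (a * e (g * h)⁻¹) * (e (g * h) * e g) := by rw [mul_assoc]
        _ = α (g * h) ((a * e (g * h)⁻¹) * (e (g * h)⁻¹ * e h⁻¹)) := hm.symm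
        _ = α (g * h) (a * (e (g * h)⁻¹ * e h⁻¹)) := by rw [absorb2]
        _ = α (g * h) (a * (e h⁻¹ * e (g * h)⁻¹)) := by rw [he_central h⁻¹ (e (g*h)⁻¹)]
    rw [stepA, stepB, hα_comp]
  refine ⟨?_, ?_, ?_⟩
  · intro a
    rw [← hb_one, hact, inv_one, he_one, mul_one, hα_one]
  · intro x a b
    have heq : act.flip (a * b) =
        (LinearMap.mul' k A) ∘ₗ (TensorProduct.map (act.flip a) (act.flip b))
          ∘ₗ (Coalgebra.comul (R := k)) := by
      apply bKG.ext
      intro g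
      simp only [LinearMap.flip_apply, LinearMap.comp_apply, hΔ g,
        TensorProduct.map_tmul, LinearMap.mul'_apply, hact]
      exact mult g a b
    simpa using LinearMap.congr_fun heq x
  · intro x y a
    have key : ∀ g : G, act (bKG g) (act y a) = act (bKG g) 1 * act (bKG g * y) a := by
      intro g
      have heq : (act (bKG g)) ∘ₗ (act.flip a)
          = (LinearMap.mulLeft k (act (bKG g) 1)) ∘ₗ (act.flip a)
            ∘ₗ (LinearMap.mulLeft k (bKG g)) := by
        apply bKG.ext
        intro h
        simp only [LinearMap.comp_apply, LinearMap.flip_apply, LinearMap.mulLeft_apply,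
          hb_mul, hact]
        rw [one_mul, αe]
        exact L g h a
      simpa using LinearMap.congr_fun heq y
    have heq2 : act.flip (act y a) =
        (LinearMap.mul' k A) ∘ₗ (TensorProduct.map (act.flip 1)
          ((act.flip a) ∘ₗ LinearMap.mulRight k y)) ∘ₗ (Coalgebra.comul (R := k)) := by
      apply bKG.ext
      intro g
      simp only [LinearMap.flip_apply, LinearMap.comp_apply, hΔ g,
        TensorProduct.map_tmul, LinearMap.mul'_apply, LinearMap.mulRight_apply]
      exact key g
    simpa using LinearMap.congr_fun heq2 x
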